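/- Let n ≥ 1, let F : ℝⁿ → ℝⁿ be differentiable at a point r with F(r) = 0 and with invertible Fréchet derivative DF(r), and let p ≥ 1 and ξ ≥ 0. Then there exist c > 0 and δ > 0 such that for all a ∈ ℝⁿ with 0 < ‖a − r‖ < δ, the deflated residual satisfies ‖F(a)‖ · (‖a − r‖^{−p} + ξ) ≥ c. In particular, the norm of the deflated residual G(a) := F(a)(‖a − r‖^{−p} + ξ) does not tend to zero as a → r, so Newton's method applied to G cannot reconverge to the known root r. -/

import Mathlib

open Real

/-- (Deflation bounds the deflated residual away from zero near a known
nondegenerate root.) If `F : ℝⁿ → ℝⁿ` is differentiable at `r` with `F(r) = 0` and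
invertible Fréchet derivative, then for the deflation power `p ≥ 1` and shift `ξ ≥ 0`
there are `c > 0` and `δ > 0` with `‖F(a)‖(‖a−r‖^{−p} + ξ) ≥ c` whenever
`0 < ‖a − r‖ < δ`; hence Newton's method applied to the deflated residual
`G(a) = F(a)(‖a−r‖^{−p} + ξ)` cannot reconverge to `r`. -/
theorem stmt14 (n : ℕ) (hn : 1 ≤ n)
    (F : EuclideanSpace ℝ (Fin n) → EuclideanSpace ℝ (Fin n))
    (r : EuclideanSpace ℝ (Fin n))
    (F' : EuclideanSpace ℝ (Fin n) →L[ℝ] EuclideanSpace ℝ (Fin n))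
    (hF : HasFDerivAt F F' r) (hFr : F r = 0)
    (hinv : Function.Bijective F')
    (p ξ : ℝ) (hp : 1 ≤ p) (hξ : 0 ≤ ξ) :
    ∃ c > 0, ∃ δ > 0, ∀ a : EuclideanSpace ℝ (Fin n),
      0 < ‖a - r‖ → ‖a - r‖ < δ → c ≤ ‖F a‖ * (‖a - r‖ ^ (-p) + ξ) := by
  set e := (LinearEquiv.ofBijective F'.toLinearMap hinv).toContinuousLinearEquiv with he
  set K : ℝ := max ‖(e.symm : EuclideanSpace ℝ (Fin n) →L[ℝ] EuclideanSpace ℝ (Fin n))‖ 1 with hK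
  have hK1 : (1:ℝ) ≤ K := le_max_right _ _
  have hK0 : (0:ℝ) < K := lt_of_lt_of_le one_pos hK1
  -- antilipschitz bound: ‖x‖ ≤ K * ‖F' x‖
  have hlow : ∀ x : EuclideanSpace ℝ (Fin n), ‖x‖ ≤ K * ‖F' x‖ := by
    intro x
    have hx : x = e.symm (e x) := (e.symm_apply_apply x).symm
    have hex : (e x : EuclideanSpace ℝ (Fin n)) = F' x := rfl
    calc ‖x‖ = ‖e.symm (e x)‖ := by rw [← hx]
      _ ≤ ‖(e.symm : EuclideanSpace ℝ (Fin n) →L[ℝ] EuclideanSpace ℝ (Fin n))‖ * ‖e x‖ :=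
          (e.symm : EuclideanSpace ℝ (Fin n) →L[ℝ] EuclideanSpace ℝ (Fin n)).le_opNorm _
      _ ≤ K * ‖F' x‖ := by
          rw [hex]
          exact mul_le_mul_of_nonneg_right (le_max_left _ _) (norm_nonneg _)
  -- little-o control
  have hlo := hF.isLittleO
  have hev := hlo.def (show (0:ℝ) < 1/(2*K) by positivity)
  rw [Metric.eventually_nhds_iff] at hev
  obtain ⟨δ₀, hδ₀, hball⟩ := hev
  refine ⟨1/(2*K), by positivity, min δ₀ 1, lt_min hδ₀ one_pos, ?_⟩
  intro a ha haδ
  set t := ‖a - r‖ with ht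
  have hlt0 : t < δ₀ := lt_of_lt_of_le haδ (min_le_left _ _)
  have hlt1 : t ≤ 1 := le_of_lt (lt_of_lt_of_le haδ (min_le_right _ _))
  have hdist : dist a r < δ₀ := by rwa [dist_eq_norm]
  have hsmall : ‖F a - F r - F' (a - r)‖ ≤ 1/(2*K) * t := by
    simpa using hball hdist
  rw [hFr, sub_zero] at hsmall
  have hFa : t / (2*K) ≤ ‖F a‖ := by
    have h1 : t ≤ K * ‖F' (a - r)‖ := hlow (a - r)
    have h2 : ‖F' (a - r)‖ - ‖F a‖ ≤ ‖F a - F' (a - r)‖ := by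
      calc ‖F' (a - r)‖ - ‖F a‖ ≤ ‖F' (a - r) - F a‖ := norm_sub_norm_le _ _
        _ = ‖F a - F' (a - r)‖ := by rw [norm_sub_rev]
    have h3 : ‖F' (a - r)‖ ≤ ‖F a‖ + 1/(2*K) * t := by linarith
    have h4 : t ≤ K * (‖F a‖ + 1/(2*K) * t) :=
      h1.trans (mul_le_mul_of_nonneg_left h3 hK0.le)
    have h5 : K * (1/(2*K) * t) = t/2 := by field_simp
    have h6 : t / 2 ≤ K * ‖F a‖ := by nlinarith
    rw [div_le_iff₀ (by positivity)]
    nlinarith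
  -- main estimate
  have htp : (0:ℝ) < t ^ (-p) := Real.rpow_pos_of_pos ha _
  have key : t / (2*K) * t ^ (-p) ≤ ‖F a‖ * (t ^ (-p) + ξ) := by
    have h5 : ‖F a‖ * t ^ (-p) ≤ ‖F a‖ * (t ^ (-p) + ξ) :=
      mul_le_mul_of_nonneg_left (by linarith) (norm_nonneg _)
    exact (mul_le_mul_of_nonneg_right hFa htp.le).trans h5
  have hone : 1 ≤ t * t ^ (-p) := by
    have h7 : t ^ ((1:ℝ) + (-p)) = t ^ (1:ℝ) * t ^ (-p) := Real.rpow_add ha 1 (-p)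
    rw [Real.rpow_one] at h7
    have h8 : t * t ^ (-p) = t ^ (1 - p) := by rw [← h7, sub_eq_add_neg]
    rw [h8]
    exact Real.one_le_rpow_of_pos_of_le_one_of_nonpos ha hlt1 (by linarith)
  have : 1/(2*K) ≤ t / (2*K) * t ^ (-p) := by
    rw [div_mul_eq_mul_div, div_le_div_iff₀ (by positivity) (by positivity)]
    nlinarith
  linarith
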